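/- arXiv:1104.2262 — 3 statements merged into one kernel-verified Lean document; each statement's English description precedes it below -/
import Mathlib

section
/- Let G be a node-labelled undirected graph, T its undirected unraveling from a node v₀ with projection π. If v and w are nodes of T with π(v) = π(w), then v and w are undirected-bisimilar in T: there is an undirected bisimulation Z on T (i.e. between T and itself) with (v,w) ∈ Z. -/
open FirstOrder

namespace GFPaper

variable {L : FirstOrder.Language} {M N : Type*} {K V : Type*}

/-! ### Guarded sets, guarded tuples, partial isomorphisms, guarded bisimulations -/

/-- A guarded set of a `Σ`-structure is a nonempty (finite) subset contained in the set of
components of some tuple belonging to some relation of the structure. -/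
def IsGuardedSet (SM : L.Structure M) (B : Set M) : Prop :=
  B.Nonempty ∧ ∃ (n : ℕ) (R : L.Relations n) (a : Fin n → M),
    SM.RelMap R a ∧ B ⊆ Set.range a

/-- A guarded tuple is a tuple of pairwise distinct elements whose set of components is
a guarded set. -/
def IsGuardedTuple (SM : L.Structure M) {k : ℕ} (a : Fin k → M) : Prop :=
  Function.Injective a ∧ IsGuardedSet SM (Set.range a)

/-- A partial isomorphism between two `Σ`-structures: an injective map between finite subsets
preserving and reflecting all atomic relations.  The function `toFun` is total, but only its
restriction to `dom` is meaningful. -/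
structure PartialIso (SM : L.Structure M) (SN : L.Structure N) where
  dom : Set M
  finite_dom : dom.Finite
  toFun : M → N
  injOn : Set.InjOn toFun dom
  rel_iff : ∀ {n : ℕ} (R : L.Relations n) (a : Fin n → M), (∀ i, a i ∈ dom) →
    (SM.RelMap R a ↔ SN.RelMap R (fun i => toFun (a i)))

/-- The range of a partial isomorphism. -/
def PartialIso.rng {SM : L.Structure M} {SN : L.Structure N} (α : PartialIso SM SN) : Set N :=
  α.toFun '' α.dom

/-- A guarded bisimulation between two `Σ`-structures: a nonempty family of partial
isomorphisms between finite subsets satisfying the back-and-forth conditions over guarded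
sets. -/
structure GuardedBisim (SM : L.Structure M) (SN : L.Structure N) where
  Z : Set (PartialIso SM SN)
  nonempty : Z.Nonempty
  forth : ∀ α ∈ Z, ∀ B₀ : Set M, IsGuardedSet SM B₀ →
    ∃ γ ∈ Z, B₀ ⊆ γ.dom ∧ ∀ x ∈ α.dom ∩ γ.dom, α.toFun x = γ.toFun x
  back : ∀ α ∈ Z, ∀ B₁ : Set N, IsGuardedSet SN B₁ →
    ∃ γ ∈ Z, B₁ ⊆ γ.rng ∧ ∀ x ∈ α.dom, ∀ y ∈ γ.dom, α.toFun x = γ.toFun y → x = y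

/-- `𝔄₀,ā ∼_g 𝔄₁,b̄` : some guarded bisimulation contains the map `ā ↦ b̄`. -/
def GBisimTuple (SM : L.Structure M) (SN : L.Structure N) {k : ℕ}
    (a : Fin k → M) (b : Fin k → N) : Prop :=
  ∃ (Z : GuardedBisim SM SN) (α : PartialIso SM SN), α ∈ Z.Z ∧
    α.dom = Set.range a ∧ ∀ i, α.toFun (a i) = b i

/-- Guarded bisimilarity has finite index on the guarded tuples of a structure:
there is a finite set of guarded tuples such that every guarded tuple is guarded bisimilar
to one of them. -/
def FiniteGBisimIndex (SM : L.Structure M) : Prop :=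
  ∃ S : Set (Σ k : ℕ, Fin k → M), S.Finite ∧
    ∀ ⦃k : ℕ⦄ (a : Fin k → M), IsGuardedTuple SM a →
      ∃ b : Fin k → M, (⟨k, b⟩ : Σ k : ℕ, Fin k → M) ∈ S ∧
        IsGuardedTuple SM b ∧ GBisimTuple SM SM a b

/-! ### Undirected unraveling and undirected bisimulation -/

/-- `t` extends `s` by one edge (i.e. `s` is obtained from `t` by deleting its last node). -/
def ExtendsBy (G : SimpleGraph V) (v₀ : V) (s t : Σ u : V, G.Walk v₀ u) : Prop :=
  ∃ h : G.Adj s.1 t.1, t.2 = s.2.concat h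

/-- The undirected unraveling of a graph `G` from a node `v₀`: nodes are the finite walks
of `G` starting at `v₀`, and edges join each walk of positive length to the walk obtained
by deleting its last node. -/
def unraveling (G : SimpleGraph V) (v₀ : V) : SimpleGraph (Σ u : V, G.Walk v₀ u) where
  Adj s t := ExtendsBy G v₀ s t ∨ ExtendsBy G v₀ t s
  symm := ⟨fun _ _ h => h.symm⟩
  loopless := ⟨fun s h => by
    rcases h with ⟨h, _⟩ | ⟨h, _⟩ <;> exact G.loopless.irrefl s.1 h⟩

/-- The projection sending a node of the unraveling (a walk) to its terminal node. -/
def unravelingProj (G : SimpleGraph V) (v₀ : V) : (Σ u : V, G.Walk v₀ u) → V :=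
  fun s => s.1

/-- An undirected bisimulation between node-labelled undirected graphs. -/
def IsUndirectedBisim {V₀ V₁ Λ : Type*} (G₀ : SimpleGraph V₀) (G₁ : SimpleGraph V₁)
    (ℓ₀ : V₀ → Λ) (ℓ₁ : V₁ → Λ) (Z : Set (V₀ × V₁)) : Prop :=
  ∀ p ∈ Z, ℓ₀ p.1 = ℓ₁ p.2 ∧
    (∀ w₀, G₀.Adj p.1 w₀ → ∃ w₁, G₁.Adj p.2 w₁ ∧ (w₀, w₁) ∈ Z) ∧
    (∀ w₁, G₁.Adj p.2 w₁ → ∃ w₀, G₀.Adj p.1 w₀ ∧ (w₀, w₁) ∈ Z)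

/-! ### Tabloids -/

/-- A tabloid over a relational signature `L` and a set `K` of constant names: an undirected
graph where every node `v` carries a set `consts v ⊆ K` of constants and an atomic type
over `consts v`, encoded as the collection `rel v` of atomic facts over `consts v`; the
types of adjacent nodes agree over their common constants. -/
structure Tabloid (L : FirstOrder.Language) (K : Type*) (V : Type*) where
  graph : SimpleGraph V
  consts : V → Set K
  rel : ∀ (_v : V) {n : ℕ}, L.Relations n → (Fin n → K) → Prop
  rel_mem : ∀ (v : V) {n : ℕ} (R : L.Relations n) (c : Fin n → K),
    rel v R c → ∀ i, c i ∈ consts v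
  compat : ∀ (v w : V), graph.Adj v w → ∀ {n : ℕ} (R : L.Relations n) (c : Fin n → K),
    (∀ i, c i ∈ consts v ∩ consts w) → (rel v R c ↔ rel w R c)

namespace Tabloid

variable (T : Tabloid L K V)

/-- The pairs `(v, c)` with `v` a node and `c` one of its constants. -/
def Pairs : Type _ := {q : V × K // q.2 ∈ T.consts q.1}

/-- The relation `(v,c) ≈ (v',c')` iff `c = c'` and `c` belongs to the constants of every
node on the (unique, when the tabloid is a tree) path connecting `v` and `v'`. -/
def keq (p q : T.Pairs) : Prop :=
  p.1.2 = q.1.2 ∧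
    ∀ w : T.graph.Walk p.1.1 q.1.1, w.IsPath → ∀ z ∈ w.support, p.1.2 ∈ T.consts z

/-- The set of nodes `v` witnessing simultaneously the classes `[v_i, c_i]`, i.e. such that
`c_i ∈ K_v` and `[v, c_i] = [v_i, c_i]` for all `i`. -/
def classSet {n : ℕ} (p : Fin n → T.Pairs) : Set V :=
  {v | ∀ i, ∃ h : (p i).1.2 ∈ T.consts v,
    Quot.mk T.keq ⟨((v, (p i).1.2) : V × K), h⟩ = Quot.mk T.keq (p i)}

/-- The structure `𝔄(T)` associated to a (tree) tabloid: the universe is the set of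
`≈`-classes `[v,c]`, and a tuple satisfies a relation iff some single node witnesses all
classes and its atomic type contains the corresponding fact. -/
def AT [L.IsRelational] : L.Structure (Quot T.keq) where
  funMap := fun f _ => isEmptyElim f
  RelMap := fun {n} R x =>
    ∃ (v : V) (c : Fin n → K) (h : ∀ i, c i ∈ T.consts v),
      (∀ i, Quot.mk T.keq ⟨((v, c i) : V × K), h i⟩ = x i) ∧ T.rel v R c

/-- The undirected unraveling of a tabloid from a node: the unraveling of the underlying
graph, each walk carrying the labels of its terminal node. -/
def unravel (v₀ : V) : Tabloid L K (Σ u : V, T.graph.Walk v₀ u) where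
  graph := unraveling T.graph v₀
  consts := fun s => T.consts s.1
  rel := fun s => T.rel s.1
  rel_mem := fun s _ R c h i => T.rel_mem s.1 R c h i
  compat := by
    rintro s t (⟨h, _⟩ | ⟨h, _⟩) n R c hc
    · exact T.compat s.1 t.1 h R c hc
    · exact (T.compat t.1 s.1 h R c (fun i => ⟨(hc i).2, (hc i).1⟩)).symm

/-- An isomorphism of a tabloid onto itself: a graph automorphism preserving both labels. -/
structure Auto where
  toEquiv : V ≃ V
  adj_iff : ∀ z z', T.graph.Adj z z' ↔ T.graph.Adj (toEquiv z) (toEquiv z')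
  consts_eq : ∀ z, T.consts (toEquiv z) = T.consts z
  rel_iff : ∀ (z : V) {n : ℕ} (R : L.Relations n) (c : Fin n → K),
    T.rel (toEquiv z) R c ↔ T.rel z R c

end Tabloid

/-! ### The tabloid built from a finite model -/

/-- `χ` is the graph of a function. -/
def IsFunGraph (χ : Set (M × K)) : Prop :=
  ∀ ⦃a b b'⦄, (a, b) ∈ χ → (a, b') ∈ χ → b = b'

/-- `χ` is the graph of an injective (partial) function. -/
def IsInjGraph (χ : Set (M × K)) : Prop :=
  ∀ ⦃a a' b⦄, (a, b) ∈ χ → (a', b) ∈ χ → a = a'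

/-- The vertices of the tabloid built from a structure: injections `χ : A → K` with `A`
a guarded set, encoded via their graphs. -/
def ChiVertex (SM : L.Structure M) (K : Type*) : Type _ :=
  {χ : Set (M × K) // IsFunGraph χ ∧ IsInjGraph χ ∧ IsGuardedSet SM {a | ∃ b, (a, b) ∈ χ}}

/-- The constants of the vertex `χ`: the range of `χ`. -/
def chiConsts {SM : L.Structure M} (χ : ChiVertex SM K) : Set K :=
  {b | ∃ a, (a, b) ∈ χ.1}

/-- The atomic type of the vertex `χ`: the image under `χ` of the atomic type of its
domain in the structure. -/
def chiRel {SM : L.Structure M} (χ : ChiVertex SM K) {n : ℕ}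
    (R : L.Relations n) (c : Fin n → K) : Prop :=
  ∃ a : Fin n → M, (∀ i, (a i, c i) ∈ χ.1) ∧ SM.RelMap R a

/-- Adjacency of vertices: `χ ∪ χ'` is an injective function (and `χ ≠ χ'`). -/
def chiAdj {SM : L.Structure M} (χ χ' : ChiVertex SM K) : Prop :=
  χ ≠ χ' ∧ IsFunGraph (χ.1 ∪ χ'.1) ∧ IsInjGraph (χ.1 ∪ χ'.1)

/-! ### The guarded fragment of first-order logic -/

/-- Formulas of the guarded fragment of first-order logic over a relational signature `L`,
with variables drawn from `ℕ`: atomic formulas (including equalities), Boolean connectives,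
and guarded quantification `∃ȳ (R(x̄ȳ) ∧ φ)` and `∀ȳ (R(x̄ȳ) → φ)`. -/
inductive GFormula (L : FirstOrder.Language) : Type _ where
  | equal : ℕ → ℕ → GFormula L
  | rel : ∀ {n : ℕ}, L.Relations n → (Fin n → ℕ) → GFormula L
  | not : GFormula L → GFormula L
  | and : GFormula L → GFormula L → GFormula L
  | or : GFormula L → GFormula L → GFormula L
  | exGuard : ∀ {n : ℕ}, L.Relations n → (Fin n → ℕ) → Set ℕ → GFormula L → GFormula L
  | allGuard : ∀ {n : ℕ}, L.Relations n → (Fin n → ℕ) → Set ℕ → GFormula L → GFormula L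

namespace GFormula

/-- The free variables of a formula. -/
def free : GFormula L → Set ℕ
  | equal i j => {i, j}
  | rel _ ts => Set.range ts
  | not φ => φ.free
  | and φ ψ => φ.free ∪ ψ.free
  | or φ ψ => φ.free ∪ ψ.free
  | exGuard _ ts ys φ => (Set.range ts ∪ φ.free) \ ys
  | allGuard _ ts ys φ => (Set.range ts ∪ φ.free) \ ys

/-- Well-formedness for the guarded fragment: in every guarded quantification
`∃ȳ (R(x̄ȳ) ∧ φ)` resp. `∀ȳ (R(x̄ȳ) → φ)` the guard atom contains all free variables
of `φ` as well as all quantified variables. -/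
def IsGF : GFormula L → Prop
  | equal _ _ => True
  | rel _ _ => True
  | not φ => φ.IsGF
  | and φ ψ => φ.IsGF ∧ ψ.IsGF
  | or φ ψ => φ.IsGF ∧ ψ.IsGF
  | exGuard _ ts ys φ => φ.free ⊆ Set.range ts ∧ ys ⊆ Set.range ts ∧ φ.IsGF
  | allGuard _ ts ys φ => φ.free ⊆ Set.range ts ∧ ys ⊆ Set.range ts ∧ φ.IsGF

/-- Satisfaction of a guarded formula in a structure under a variable assignment. -/
def Sat (SM : L.Structure M) : GFormula L → (ℕ → M) → Prop
  | equal i j, β => β i = β j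
  | rel R ts, β => SM.RelMap R (fun i => β (ts i))
  | not φ, β => ¬ Sat SM φ β
  | and φ ψ, β => Sat SM φ β ∧ Sat SM ψ β
  | or φ ψ, β => Sat SM φ β ∨ Sat SM ψ β
  | exGuard R ts ys φ, β => ∃ β' : ℕ → M, (∀ x ∉ ys, β' x = β x) ∧
      SM.RelMap R (fun i => β' (ts i)) ∧ Sat SM φ β'
  | allGuard R ts ys φ, β => ∀ β' : ℕ → M, (∀ x ∉ ys, β' x = β x) →
      SM.RelMap R (fun i => β' (ts i)) → Sat SM φ β'

/-- Every subformula of `φ` has at most `n` free variables. -/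
def WidthLE (n : ℕ) : GFormula L → Prop
  | equal i j => (({i, j} : Set ℕ)).ncard ≤ n
  | rel _ ts => (Set.range ts).ncard ≤ n
  | not φ => φ.WidthLE n
  | and φ ψ => (φ.free ∪ ψ.free).ncard ≤ n ∧ φ.WidthLE n ∧ ψ.WidthLE n
  | or φ ψ => (φ.free ∪ ψ.free).ncard ≤ n ∧ φ.WidthLE n ∧ ψ.WidthLE n
  | exGuard _ ts _ φ => (Set.range ts ∪ φ.free).ncard ≤ n ∧ φ.WidthLE n
  | allGuard _ ts _ φ => (Set.range ts ∪ φ.free).ncard ≤ n ∧ φ.WidthLE n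

end GFormula


/-- If two nodes of the undirected unraveling have the same projection,
then they are undirected-bisimilar in the unraveling. -/
theorem unraveling_bisimilar_of_proj_eq {V Λ : Type*} (G : SimpleGraph V) (ℓ : V → Λ)
    (v₀ : V) (v w : Σ u : V, G.Walk v₀ u)
    (h : unravelingProj G v₀ v = unravelingProj G v₀ w) :
    ∃ Z : Set ((Σ u : V, G.Walk v₀ u) × (Σ u : V, G.Walk v₀ u)),
      IsUndirectedBisim (unraveling G v₀) (unraveling G v₀)
        (fun t => ℓ (unravelingProj G v₀ t)) (fun t => ℓ (unravelingProj G v₀ t)) Z ∧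
      (v, w) ∈ Z := by
  refine ⟨{p | p.1.1 = p.2.1}, ?_, h⟩
  have key : ∀ s t s' : Σ u : V, G.Walk v₀ u, s.1 = t.1 →
      (unraveling G v₀).Adj s s' →
      ∃ t', (unraveling G v₀).Adj t t' ∧ s'.1 = t'.1 := by
    rintro ⟨a, p⟩ ⟨b, q⟩ s' hst hadj
    dsimp at hst; subst hst
    rcases hadj with ⟨ha, _⟩ | ⟨ha, _⟩
    · exact ⟨⟨s'.1, q.concat ha⟩, Or.inl ⟨ha, rfl⟩, rfl⟩
    · exact ⟨⟨s'.1, q.concat ha.symm⟩, Or.inl ⟨ha.symm, rfl⟩, rfl⟩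
  rintro ⟨s, t⟩ hst
  refine ⟨congrArg ℓ hst, ?_, ?_⟩
  · intro s' hs'
    obtain ⟨t', ht', he⟩ := key s t s' hst hs'
    exact ⟨t', ht', he⟩
  · intro t' ht'
    obtain ⟨s', hs', he⟩ := key t s t' hst.symm ht'
    exact ⟨s', hs', he.symm⟩

end GFPaper
end

section
/- Let T be a tree tabloid and let [v₁,c₁],…,[vₙ,cₙ] be ≈-equivalence classes. Then the set of nodes v of T such that c₁,…,cₙ ∈ K_v and [v,cᵢ] = [vᵢ,cᵢ] for all i ≤ n is connected in T: if v and v' both belong to this set, then so does every node on the unique path connecting v and v'. -/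
open FirstOrder

namespace GFPaper

variable {L : FirstOrder.Language} {M N : Type*} {K V : Type*}

/-- On a tree tabloid, `keq` is an equivalence relation. -/
theorem keq_equivalence {L : FirstOrder.Language} {K V : Type*}
    (T : Tabloid L K V) (ht : T.graph.IsTree) : Equivalence T.keq := by
  classical
  constructor
  · rintro ⟨⟨a, c⟩, hc⟩
    refine ⟨rfl, ?_⟩
    intro u hu y hy
    have : u = SimpleGraph.Walk.nil := by
      exact (ht.existsUnique_path a a).unique hu SimpleGraph.Walk.IsPath.nil
    subst this
    simp only [SimpleGraph.Walk.support_nil, List.mem_singleton] at hy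
    subst hy
    exact hc
  · rintro ⟨⟨a, c⟩, hc⟩ ⟨⟨b, d⟩, hd⟩ ⟨hcd, h⟩
    refine ⟨hcd.symm, ?_⟩
    intro u hu y hy
    rw [← hcd]
    refine h u.reverse hu.reverse y ?_
    rw [SimpleGraph.Walk.support_reverse, List.mem_reverse]
    exact hy
  · rintro ⟨⟨a, c⟩, hc⟩ ⟨⟨b, d⟩, hd⟩ ⟨⟨e, f⟩, hf⟩ ⟨hcd, h1⟩ ⟨hdf, h2⟩
    refine ⟨hcd.trans hdf, ?_⟩
    intro u hu y hy
    obtain ⟨u1, hu1, -⟩ := ht.existsUnique_path a b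
    obtain ⟨u2, hu2, -⟩ := ht.existsUnique_path b e
    have hub : u = (u1.append u2).bypass :=
      (ht.existsUnique_path a e).unique hu (SimpleGraph.Walk.bypass_isPath _)
    have hy' : y ∈ (u1.append u2).support := by
      rw [hub] at hy
      exact SimpleGraph.Walk.support_bypass_subset _ hy
    rw [SimpleGraph.Walk.mem_support_append_iff] at hy'
    rcases hy' with hy' | hy'
    · exact h1 u1 hu1 y hy'
    · rw [hcd]; exact h2 u2 hu2 y hy'

/-- For a tree tabloid `T` and `≈`-classes `[v₁,c₁],…,[vₙ,cₙ]`, the set of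
nodes `v` with `cᵢ ∈ K_v` and `[v,cᵢ] = [vᵢ,cᵢ]` for all `i` is connected in `T`: every node
on the unique path connecting two of its members also belongs to it. -/
theorem classSet_connected {L : FirstOrder.Language} [L.IsRelational] {K V : Type*}
    [Finite K] (T : Tabloid L K V) (ht : T.graph.IsTree) {n : ℕ} (p : Fin n → T.Pairs)
    (v v' : V) (hv : v ∈ T.classSet p) (hv' : v' ∈ T.classSet p)
    (w : T.graph.Walk v v') (hw : w.IsPath) :
    ∀ z ∈ w.support, z ∈ T.classSet p := by
  classical
  have hkeq : Equivalence T.keq := keq_equivalence T ht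
  intro z hz i
  obtain ⟨hvi, hvq⟩ := hv i
  obtain ⟨hvi', hvq'⟩ := hv' i
  set c := (p i).1.2 with hc
  -- turn Quot equalities into keq facts
  have hkv : T.keq ⟨(v, c), hvi⟩ (p i) :=
    hkeq.eqvGen_iff.mp (Quot.eq.mp hvq)
  have hkv' : T.keq ⟨(v', c), hvi'⟩ (p i) :=
    hkeq.eqvGen_iff.mp (Quot.eq.mp hvq')
  have hvv' : T.keq ⟨(v, c), hvi⟩ ⟨(v', c), hvi'⟩ :=
    hkeq.trans hkv (hkeq.symm hkv')
  -- every node on w has c among its constants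
  have hall : ∀ y ∈ w.support, c ∈ T.consts y := hvv'.2 w hw
  have hcz : c ∈ T.consts z := hall z hz
  refine ⟨hcz, ?_⟩
  -- show keq ⟨(z,c)⟩ ⟨(v,c)⟩
  have hzv : T.keq ⟨(z, c), hcz⟩ ⟨(v, c), hvi⟩ := by
    refine ⟨rfl, ?_⟩
    intro u hu y hy
    have hu' : u = (w.takeUntil z hz).reverse := by
      have h1 := (ht.existsUnique_path z v).unique hu
        ((hw.takeUntil hz).reverse)
      exact h1
    apply hall
    apply SimpleGraph.Walk.support_takeUntil_subset w hz
    rw [hu', SimpleGraph.Walk.support_reverse] at hy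
    exact List.mem_reverse.mp hy
  exact Quot.eq.mpr (Relation.EqvGen.rel _ _ (hkeq.trans hzv hkv))

end GFPaper
end

section
/- Let T be a tree tabloid and suppose there is an isomorphism of T onto itself (a graph automorphism preserving both labels K_z and τ_z) mapping node v to node w, and let K_v = K_w = {c₁,…,cᵣ}. Then 𝔄(T),([v,c₁],…,[v,cᵣ]) ∼_g 𝔄(T),([w,c₁],…,[w,cᵣ]), i.e. there is a guarded bisimulation between 𝔄(T) and itself containing the map ([v,c₁],…,[v,cᵣ]) ↦ ([w,c₁],…,[w,cᵣ]). -/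
open FirstOrder

namespace GFPaper

variable {L : FirstOrder.Language} {M N : Type*} {K V : Type*}

/-! ### Auxiliary development for Statement 9 -/

theorem IsGuardedSet.finite {SM : L.Structure M} {B : Set M} (h : IsGuardedSet SM B) :
    B.Finite := by
  obtain ⟨_, n, R, a, _, hsub⟩ := h
  exact (Set.finite_range a).subset hsub

namespace Tabloid

variable {T : Tabloid L K V}

/-- The graph homomorphism induced by an automorphism. -/
def Auto.hom (σ : T.Auto) : T.graph →g T.graph where
  toFun := σ.toEquiv
  map_rel' := fun h => (σ.adj_iff _ _).mp h

/-- The inverse of an automorphism. -/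
def Auto.symmAuto (σ : T.Auto) : T.Auto where
  toEquiv := σ.toEquiv.symm
  adj_iff := fun z z' => by
    have := σ.adj_iff (σ.toEquiv.symm z) (σ.toEquiv.symm z')
    rw [Equiv.apply_symm_apply, Equiv.apply_symm_apply] at this
    exact this.symm
  consts_eq := fun z => by
    have := σ.consts_eq (σ.toEquiv.symm z)
    rw [Equiv.apply_symm_apply] at this
    exact this.symm
  rel_iff := fun z {n} R c => by
    have := σ.rel_iff (σ.toEquiv.symm z) R c
    rw [Equiv.apply_symm_apply] at this
    exact this.symm

/-- The map on pairs induced by an automorphism. -/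
def Auto.pairMap (σ : T.Auto) (p : T.Pairs) : T.Pairs :=
  ⟨(σ.toEquiv p.1.1, p.1.2), by rw [σ.consts_eq]; exact p.2⟩

theorem Auto.keq_pairMap (σ : T.Auto) {p q : T.Pairs} (h : T.keq p q) :
    T.keq (σ.pairMap p) (σ.pairMap q) := by
  refine ⟨h.1, fun w hw z hz => ?_⟩
  let w' : T.graph.Walk p.1.1 q.1.1 :=
    (w.map σ.symmAuto.hom).copy (σ.toEquiv.symm_apply_apply _) (σ.toEquiv.symm_apply_apply _)
  have hpath : w'.IsPath := by
    exact (SimpleGraph.Walk.isPath_copy _ _ _).mpr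
      (SimpleGraph.Walk.map_isPath_of_injective σ.toEquiv.symm.injective hw)
  have hz' : σ.toEquiv.symm z ∈ w'.support := by
    show σ.toEquiv.symm z ∈ (SimpleGraph.Walk.copy _ _ _).support
    exact (congrArg (σ.toEquiv.symm z ∈ ·) ((SimpleGraph.Walk.support_copy _ _ _).trans
      (SimpleGraph.Walk.support_map _ _))).mpr (List.mem_map.mpr ⟨z, hz, rfl⟩)
  have hmem := h.2 w' hpath _ hz'
  have e : T.consts (σ.toEquiv.symm z) = T.consts z := σ.symmAuto.consts_eq z
  rw [e] at hmem
  exact hmem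

/-- The map on `≈`-classes induced by an automorphism. -/
def Auto.qmap (σ : T.Auto) : Quot T.keq → Quot T.keq :=
  Quot.lift (fun p => Quot.mk T.keq (σ.pairMap p)) fun _ _ h => Quot.sound (σ.keq_pairMap h)

theorem Auto.qmap_symm_qmap (σ : T.Auto) (x : Quot T.keq) :
    σ.symmAuto.qmap (σ.qmap x) = x := by
  induction x using Quot.ind with
  | _ p =>
    exact congrArg (Quot.mk T.keq)
      (Subtype.ext (by simp [Auto.pairMap, Auto.symmAuto]))

theorem Auto.qmap_qmap_symm (σ : T.Auto) (x : Quot T.keq) :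
    σ.qmap (σ.symmAuto.qmap x) = x := by
  induction x using Quot.ind with
  | _ p =>
    exact congrArg (Quot.mk T.keq)
      (Subtype.ext (by simp [Auto.pairMap, Auto.symmAuto]))

theorem Auto.qmap_injective (σ : T.Auto) : Function.Injective σ.qmap :=
  Function.LeftInverse.injective σ.qmap_symm_qmap

theorem Auto.relMap_qmap [L.IsRelational] (σ : T.Auto) {n : ℕ} (R : L.Relations n)
    (x : Fin n → Quot T.keq) (h : T.AT.RelMap R x) :
    T.AT.RelMap R fun i => σ.qmap (x i) := by
  obtain ⟨u, cc, hcc, hx, hr⟩ := h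
  exact ⟨σ.toEquiv u, cc, fun i => by rw [σ.consts_eq]; exact hcc i,
    fun i => by simp only [← hx i]; rfl, (σ.rel_iff u R cc).mpr hr⟩

theorem Auto.relMap_qmap_iff [L.IsRelational] (σ : T.Auto) {n : ℕ} (R : L.Relations n)
    (x : Fin n → Quot T.keq) :
    T.AT.RelMap R x ↔ T.AT.RelMap R fun i => σ.qmap (x i) := by
  refine ⟨σ.relMap_qmap R x, fun h => ?_⟩
  have h2 := σ.symmAuto.relMap_qmap R _ h
  simp only [Auto.qmap_symm_qmap] at h2
  exact h2

/-- The restriction of the induced map to a finite set, as a partial isomorphism. -/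
def Auto.mkIso [L.IsRelational] (σ : T.Auto) (S : Set (Quot T.keq)) (hS : S.Finite) :
    PartialIso T.AT T.AT where
  dom := S
  finite_dom := hS
  toFun := σ.qmap
  injOn := fun _ _ _ _ h => σ.qmap_injective h
  rel_iff := fun R a _ => σ.relMap_qmap_iff R a

end Tabloid

/-- If a label-preserving automorphism of a tree tabloid `T` maps node `v`
to node `w`, and `K_v = K_w = {c₁,…,cᵣ}`, then
`𝔄(T),([v,c₁],…,[v,cᵣ]) ∼_g 𝔄(T),([w,c₁],…,[w,cᵣ])`. -/
theorem auto_gbisim_tuples {L : FirstOrder.Language} [L.IsRelational] {K V : Type*}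
    [Finite K] (T : Tabloid L K V) (ht : T.graph.IsTree) (σ : T.Auto) (v w : V)
    (hvw : σ.toEquiv v = w) {r : ℕ} (c : Fin r → K) (hinj : Function.Injective c)
    (hv : ∀ i, c i ∈ T.consts v) (hv' : T.consts v ⊆ Set.range c)
    (hw : ∀ i, c i ∈ T.consts w) (hw' : T.consts w ⊆ Set.range c) :
    GBisimTuple T.AT T.AT (fun i => Quot.mk T.keq ⟨((v, c i) : V × K), hv i⟩)
      (fun i => Quot.mk T.keq ⟨((w, c i) : V × K), hw i⟩) := by
  classical
  refine ⟨{ Z := {α : PartialIso T.AT T.AT | α.toFun = σ.qmap}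
            nonempty := ⟨σ.mkIso ∅ Set.finite_empty, rfl⟩
            forth := fun α hα B₀ hB₀ => by
              refine ⟨σ.mkIso (α.dom ∪ B₀) (α.finite_dom.union hB₀.finite), rfl,
                Set.subset_union_right, fun x _ => ?_⟩
              rw [hα]; rfl
            back := fun α hα B₁ hB₁ => by
              refine ⟨σ.mkIso (σ.symmAuto.qmap '' B₁) (hB₁.finite.image _), rfl,
                fun b hb => ⟨σ.symmAuto.qmap b, ⟨b, hb, rfl⟩, σ.qmap_qmap_symm b⟩,
                fun x _ y _ hxy => ?_⟩
              rw [hα] at hxy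
              exact σ.qmap_injective hxy },
    σ.mkIso (Set.range fun i => Quot.mk T.keq ⟨((v, c i) : V × K), hv i⟩)
      (Set.finite_range _), rfl, rfl, fun i => ?_⟩
  show Quot.mk T.keq (σ.pairMap ⟨((v, c i) : V × K), hv i⟩) =
    Quot.mk T.keq ⟨((w, c i) : V × K), hw i⟩
  exact congrArg (Quot.mk T.keq) (Subtype.ext (by simp [Tabloid.Auto.pairMap, hvw]))

end GFPaper
end
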